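/- arXiv:1710.05177 — 4 statements merged into one kernel-verified Lean document; each statement's English description precedes it below -/
import Mathlib

section
/- The Zeeman Z topology on Minkowski space ℝ⁴ equals the intersection topology of the Euclidean topology E and the interval topology T_in^→ induced by the irreflexive horismos relation; that is, the family {U ∩ V : U open in E, V open in T_in^→} forms a base for the Zeeman Z topology. -/
open Topology Set

/-- Minkowski space: `ℝ⁴` with the Euclidean metric structure. -/
abbrev M : Type := EuclideanSpace ℝ (Fin 4)

/-- The characteristic quadratic form `Q(x) = x₀² − x₁² − x₂² − x₃²`. -/
noncomputable def Q (x : M) : ℝ := x 0 ^ 2 - x 1 ^ 2 - x 2 ^ 2 - x 3 ^ 2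

/-- The Euclidean topology `E` on `M`. -/
noncomputable def E : TopologicalSpace M := inferInstance

/-- The light cone of `x`. -/
def lightCone (x : M) : Set M := {y | Q (y - x) = 0}

/-- The time cone of `x`. -/
def timeCone (x : M) : Set M := {x} ∪ {y | Q (y - x) > 0}

/-- The space cone of `x`. -/
def spaceCone (x : M) : Set M := {x} ∪ {y | Q (y - x) < 0}

/-- The basic open sets `Z_ε(x) = B_ε^E(x) ∩ (C^T(x) ∪ C^S(x))` of the Zeeman `Z` topology. -/
def Zset (x : M) (ε : ℝ) : Set M := Metric.ball x ε ∩ (timeCone x ∪ spaceCone x)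

/-- The Zeeman `Z` topology, generated by the base of the sets `Z_ε(x)`. -/
def ZeemanZ : TopologicalSpace M :=
  TopologicalSpace.generateFrom {s | ∃ x : M, ∃ ε : ℝ, 0 < ε ∧ s = Zset x ε}

/-- The irreflexive horismos relation `x → y`. -/
def horismos (x y : M) : Prop := y ≠ x ∧ Q (y - x) = 0 ∧ (y - x) 0 > 0

/-- The future null cone `N⁺(x)`. -/
def Nplus (x : M) : Set M := {y | horismos x y}

/-- The past null cone `N⁻(x)`. -/
def Nminus (x : M) : Set M := {y | horismos y x}

/-- The interval topology `T_in^→` induced by the irreflexive horismos relation,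
generated by the subbase of complements of future and past null cones. -/
def Tin : TopologicalSpace M :=
  TopologicalSpace.generateFrom
    ({s | ∃ x : M, s = univ \ Nplus x} ∪ {s | ∃ x : M, s = univ \ Nminus x})

/-- A time axis: an affine line with timelike direction. -/
def IsTimeAxis (L : Set M) : Prop :=
  ∃ a v : M, Q v > 0 ∧ L = {p | ∃ t : ℝ, p = a + t • v}

/-- A space axis: an affine 3-flat whose direction is a 3-dimensional subspace
on which `Q` is negative definite. -/
def IsSpaceAxis (L : Set M) : Prop :=
  ∃ a : M, ∃ W : Submodule ℝ M, Module.finrank ℝ W = 3 ∧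
    (∀ w ∈ W, w ≠ 0 → Q w < 0) ∧ L = {p | ∃ w ∈ W, p = a + w}

/-- A topology `t` on `M` induces the Euclidean subspace topology on every time axis
and on every space axis. -/
def InducesEuclideanOnAxes (t : TopologicalSpace M) : Prop :=
  (∀ L : Set M, IsTimeAxis L →
    TopologicalSpace.induced (Subtype.val : L → M) t =
      TopologicalSpace.induced (Subtype.val : L → M) E) ∧
  (∀ L : Set M, IsSpaceAxis L →
    TopologicalSpace.induced (Subtype.val : L → M) t =
      TopologicalSpace.induced (Subtype.val : L → M) E)

/-- Zeeman's Fine topology `F`: the finest topology on `M` inducing the Euclidean topology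
on every time and space axis.  (In Mathlib's lattice of topologies, `≤` means "finer",
so the finest such topology is the infimum of the family.) -/
noncomputable def FineF : TopologicalSpace M :=
  sInf {t : TopologicalSpace M | InducesEuclideanOnAxes t}

/-- The chronological order `x ≪ y`. -/
def chron (x y : M) : Prop := Q (y - x) > 0 ∧ (y - x) 0 > 0


lemma Q_neg (v : M) : Q (-v) = Q v := by simp [Q]

lemma Q_sub_swap (x y : M) : Q (x - y) = Q (y - x) := by
  rw [← neg_sub y x, Q_neg]

lemma cont_coord (x : M) (i : Fin 4) : Continuous fun y : M => (y - x) i :=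
  (EuclideanSpace.proj (𝕜 := ℝ) i).continuous.comp (continuous_id.sub continuous_const)

lemma Qcont (x : M) : Continuous fun y : M => Q (y - x) :=
  ((((cont_coord x 0).pow 2).sub ((cont_coord x 1).pow 2)).sub
    ((cont_coord x 2).pow 2)).sub ((cont_coord x 3).pow 2)

lemma Q_zero_coord {v : M} (hQ : Q v = 0) (h0 : v 0 = 0) : v = 0 := by
  unfold Q at hQ
  have h1 : v 1 = 0 := by nlinarith [sq_nonneg (v 1), sq_nonneg (v 2), sq_nonneg (v 3)]
  have h2 : v 2 = 0 := by nlinarith [sq_nonneg (v 1), sq_nonneg (v 2), sq_nonneg (v 3)]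
  have h3 : v 3 = 0 := by nlinarith [sq_nonneg (v 1), sq_nonneg (v 2), sq_nonneg (v 3)]
  ext i
  fin_cases i <;> simp [h0, h1, h2, h3]

lemma coord_ne {v : M} (hv : v ≠ 0) (hQ : Q v = 0) : v 0 ≠ 0 :=
  fun h => hv (Q_zero_coord hQ h)

lemma mem_cones {x y : M} : y ∈ timeCone x ∪ spaceCone x ↔ y = x ∨ Q (y - x) ≠ 0 := by
  simp only [timeCone, spaceCone, mem_union, mem_singleton_iff, mem_setOf_eq]
  constructor
  · rintro ((h | h) | (h | h))
    · exact Or.inl h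
    · exact Or.inr (ne_of_gt h)
    · exact Or.inl h
    · exact Or.inr (ne_of_lt h)
  · rintro (h | h)
    · exact Or.inl (Or.inl h)
    · rcases lt_or_gt_of_ne h with h' | h'
      · exact Or.inr (Or.inr h')
      · exact Or.inl (Or.inr h')

lemma cone_eq (x : M) :
    timeCone x ∪ spaceCone x = (univ \ Nplus x) ∩ (univ \ Nminus x) := by
  ext y
  rw [mem_cones]
  simp only [Nplus, Nminus, horismos, mem_inter_iff, mem_diff, mem_univ, true_and,
    mem_setOf_eq]
  constructor
  · rintro (rfl | h)
    · constructor <;> rintro ⟨hne, -, -⟩ <;> exact hne rfl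
    · constructor
      · rintro ⟨-, h0, -⟩; exact h h0
      · rintro ⟨-, h0, -⟩; exact h ((Q_sub_swap x y) ▸ h0)
  · rintro ⟨h1, h2⟩
    by_cases hxy : y = x
    · exact Or.inl hxy
    · refine Or.inr (fun hQ0 => ?_)
      have hc := coord_ne (sub_ne_zero.mpr hxy) hQ0
      rcases hc.lt_or_gt with hlt | hgt
      · refine h2 ⟨fun h => hxy h.symm, (Q_sub_swap x y) ▸ hQ0, ?_⟩
        have : (x - y) 0 = -((y - x) 0) := by
          show x 0 - y 0 = -(y 0 - x 0); ring
        rw [this]; linarith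
      · exact h1 ⟨hxy, hQ0, hgt⟩

lemma isOpen_Qne (x : M) : IsOpen {y : M | Q (y - x) ≠ 0} :=
  isOpen_ne.preimage (Qcont x)

lemma isOpen_Qpos (x : M) : IsOpen {y : M | 0 < Q (y - x)} :=
  isOpen_Ioi.preimage (Qcont x)

lemma isOpen_Qneg (x : M) : IsOpen {y : M | Q (y - x) < 0} :=
  isOpen_Iio.preimage (Qcont x)

lemma isOpen_cpos (x : M) : IsOpen {y : M | 0 < (y - x) 0} :=
  isOpen_Ioi.preimage (cont_coord x 0)

lemma isOpen_cneg (x : M) : IsOpen {y : M | (y - x) 0 < 0} :=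
  isOpen_Iio.preimage (cont_coord x 0)

lemma mem_Zset_self (a : M) {δ : ℝ} (hδ : 0 < δ) : a ∈ Zset a δ :=
  ⟨Metric.mem_ball_self hδ, Or.inl (Or.inl rfl)⟩

lemma Zset_mono (a : M) {δ δ' : ℝ} (h : δ ≤ δ') : Zset a δ ⊆ Zset a δ' :=
  inter_subset_inter (Metric.ball_subset_ball h) subset_rfl

lemma zsub_nplus (x : M) {a : M} (ha : a ∉ Nplus x) :
    ∃ δ > 0, Zset a δ ⊆ univ \ Nplus x := by
  by_cases hax : a = x
  · subst hax
    refine ⟨1, one_pos, fun y hy => ?_⟩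
    have h2 := hy.2
    rw [cone_eq] at h2
    exact h2.1
  · by_cases hQ : Q (a - x) = 0
    · have h0 : (a - x) 0 < 0 := by
        have hne := coord_ne (sub_ne_zero.mpr hax) hQ
        rcases hne.lt_or_gt with h | h
        · exact h
        · exact absurd (⟨hax, hQ, h⟩ : horismos x a) ha
      obtain ⟨δ, hδ, hb⟩ := Metric.isOpen_iff.mp (isOpen_cneg x) a h0
      refine ⟨δ, hδ, fun y hy => ⟨trivial, fun hyN => ?_⟩⟩
      exact absurd hyN.2.2 (not_lt.mpr (hb hy.1).le)
    · obtain ⟨δ, hδ, hb⟩ := Metric.isOpen_iff.mp (isOpen_Qne x) a hQ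
      exact ⟨δ, hδ, fun y hy => ⟨trivial, fun hyN => (hb hy.1) hyN.2.1⟩⟩

lemma zsub_nminus (x : M) {a : M} (ha : a ∉ Nminus x) :
    ∃ δ > 0, Zset a δ ⊆ univ \ Nminus x := by
  by_cases hax : a = x
  · subst hax
    refine ⟨1, one_pos, fun y hy => ?_⟩
    have h2 := hy.2
    rw [cone_eq] at h2
    exact h2.2
  · by_cases hQ : Q (a - x) = 0
    · have h0 : 0 < (a - x) 0 := by
        have hne := coord_ne (sub_ne_zero.mpr hax) hQ
        rcases hne.lt_or_gt with h | h
        · refine absurd (⟨fun h' => hax h'.symm, (Q_sub_swap x a) ▸ hQ, ?_⟩ :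
            horismos a x) ha
          have : (x - a) 0 = -((a - x) 0) := by
            show x 0 - a 0 = -(a 0 - x 0); ring
          rw [this]; linarith
        · exact h
      obtain ⟨δ, hδ, hb⟩ := Metric.isOpen_iff.mp (isOpen_cpos x) a h0
      refine ⟨δ, hδ, fun y hy => ⟨trivial, fun hyN => ?_⟩⟩
      have h1 : 0 < (y - x) 0 := hb hy.1
      have h2 : 0 < (x - y) 0 := hyN.2.2
      have : (x - y) 0 = -((y - x) 0) := by
        show x 0 - y 0 = -(y 0 - x 0); ring
      rw [this] at h2; linarith
    · obtain ⟨δ, hδ, hb⟩ := Metric.isOpen_iff.mp (isOpen_Qne x) a hQ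
      refine ⟨δ, hδ, fun y hy => ⟨trivial, fun hyN => ?_⟩⟩
      exact (hb hy.1) ((Q_sub_swap x y) ▸ hyN.2.1)

lemma zsub_zset (x : M) (ε : ℝ) {a : M} (ha : a ∈ Zset x ε) :
    ∃ δ > 0, Zset a δ ⊆ Zset x ε := by
  obtain ⟨δ₁, hδ₁, hb₁⟩ := Metric.isOpen_iff.mp Metric.isOpen_ball a ha.1
  by_cases hax : a = x
  · subst hax
    exact ⟨δ₁, hδ₁, fun y hy => ⟨hb₁ hy.1, hy.2⟩⟩
  · have hQ : Q (a - x) ≠ 0 := (mem_cones.mp ha.2).resolve_left hax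
    rcases lt_or_gt_of_ne hQ with h | h
    · obtain ⟨δ₂, hδ₂, hb₂⟩ := Metric.isOpen_iff.mp (isOpen_Qneg x) a h
      refine ⟨min δ₁ δ₂, lt_min hδ₁ hδ₂, fun y hy => ?_⟩
      refine ⟨hb₁ (Metric.ball_subset_ball (min_le_left _ _) hy.1),
        Or.inr (Or.inr (hb₂ (Metric.ball_subset_ball (min_le_right _ _) hy.1)))⟩
    · obtain ⟨δ₂, hδ₂, hb₂⟩ := Metric.isOpen_iff.mp (isOpen_Qpos x) a h
      refine ⟨min δ₁ δ₂, lt_min hδ₁ hδ₂, fun y hy => ?_⟩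
      refine ⟨hb₁ (Metric.ball_subset_ball (min_le_left _ _) hy.1),
        Or.inl (Or.inr (hb₂ (Metric.ball_subset_ball (min_le_right _ _) hy.1)))⟩

lemma zOpen {s : Set M} (h : ∀ a ∈ s, ∃ δ > 0, Zset a δ ⊆ s) :
    IsOpen[ZeemanZ] s := by
  have hs : s = ⋃₀ {t | (∃ x : M, ∃ ε : ℝ, 0 < ε ∧ t = Zset x ε) ∧ t ⊆ s} := by
    apply Subset.antisymm
    · intro a ha
      obtain ⟨δ, hδ, hsub⟩ := h a ha
      exact ⟨Zset a δ, ⟨⟨a, δ, hδ, rfl⟩, hsub⟩, mem_Zset_self a hδ⟩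
    · rintro a ⟨t, ⟨-, hts⟩, hat⟩
      exact hts hat
  rw [hs]
  exact @isOpen_sUnion M ZeemanZ _
    (fun t ht => TopologicalSpace.GenerateOpen.basic t ht.1)

lemma tin_pt {V : Set M} (hV : IsOpen[Tin] V) :
    ∀ a ∈ V, ∃ δ > 0, Zset a δ ⊆ V := by
  have hV' : TopologicalSpace.GenerateOpen
      ({s | ∃ x : M, s = univ \ Nplus x} ∪ {s | ∃ x : M, s = univ \ Nminus x}) V := hV
  clear hV
  induction hV' with
  | basic s hs =>
    intro a ha
    rcases hs with ⟨x, rfl⟩ | ⟨x, rfl⟩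
    · exact zsub_nplus x (fun h => ha.2 h)
    · exact zsub_nminus x (fun h => ha.2 h)
  | univ => exact fun a _ => ⟨1, one_pos, subset_univ _⟩
  | inter s t _ _ ihs iht =>
    rintro a ⟨has, hat⟩
    obtain ⟨δ₁, hδ₁, h₁⟩ := ihs a has
    obtain ⟨δ₂, hδ₂, h₂⟩ := iht a hat
    exact ⟨min δ₁ δ₂, lt_min hδ₁ hδ₂,
      fun y hy => ⟨h₁ (Zset_mono a (min_le_left _ _) hy),
        h₂ (Zset_mono a (min_le_right _ _) hy)⟩⟩
  | sUnion S _ ih =>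
    rintro a ⟨t, htS, hat⟩
    obtain ⟨δ, hδ, hsub⟩ := ih t htS a hat
    exact ⟨δ, hδ, hsub.trans (subset_sUnion_of_mem htS)⟩

lemma z_pt {s : Set M} (hs : IsOpen[ZeemanZ] s) :
    ∀ a ∈ s, ∃ x : M, ∃ ε : ℝ, 0 < ε ∧ a ∈ Zset x ε ∧ Zset x ε ⊆ s := by
  have hs' : TopologicalSpace.GenerateOpen
      {u | ∃ x : M, ∃ ε : ℝ, 0 < ε ∧ u = Zset x ε} s := hs
  clear hs
  induction hs' with
  | basic u hu =>
    rcases hu with ⟨x, ε, hε, rfl⟩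
    exact fun a ha => ⟨x, ε, hε, ha, subset_rfl⟩
  | univ => exact fun a _ => ⟨a, 1, one_pos, mem_Zset_self a one_pos, subset_univ _⟩
  | inter u v _ _ ihu ihv =>
    rintro a ⟨hau, hav⟩
    obtain ⟨x, ε, hε, hax, hsub⟩ := ihu a hau
    obtain ⟨x', ε', hε', hax', hsub'⟩ := ihv a hav
    obtain ⟨δ₁, hδ₁, h₁⟩ := zsub_zset x ε hax
    obtain ⟨δ₂, hδ₂, h₂⟩ := zsub_zset x' ε' hax'
    refine ⟨a, min δ₁ δ₂, lt_min hδ₁ hδ₂, mem_Zset_self a (lt_min hδ₁ hδ₂),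
      fun y hy => ⟨hsub (h₁ (Zset_mono a (min_le_left _ _) hy)),
        hsub' (h₂ (Zset_mono a (min_le_right _ _) hy))⟩⟩
  | sUnion S _ ih =>
    rintro a ⟨t, htS, hat⟩
    obtain ⟨x, ε, hε, hax, hsub⟩ := ih t htS a hat
    exact ⟨x, ε, hε, hax, hsub.trans (subset_sUnion_of_mem htS)⟩

/-- The Zeeman `Z` topology equals the intersection topology of the
Euclidean topology `E` and the interval topology `T_in^→`: the family
`{U ∩ V : U open in E, V open in T_in^→}` forms a base for the Zeeman `Z` topology. -/
theorem zeemanZ_eq_intersectionTopology :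
    @TopologicalSpace.IsTopologicalBasis M ZeemanZ
      {s : Set M | ∃ U V : Set M, IsOpen[E] U ∧ IsOpen[Tin] V ∧ s = U ∩ V} := by
  refine @TopologicalSpace.isTopologicalBasis_of_isOpen_of_nhds M ZeemanZ _ ?_ ?_
  · rintro u ⟨U, V, hU, hV, rfl⟩
    apply zOpen
    rintro a ⟨haU, haV⟩
    obtain ⟨δ₁, hδ₁, hbU⟩ := Metric.isOpen_iff.mp hU a haU
    obtain ⟨δ₂, hδ₂, hzV⟩ := tin_pt hV a haV
    exact ⟨min δ₁ δ₂, lt_min hδ₁ hδ₂,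
      fun y hy => ⟨hbU (Metric.ball_subset_ball (min_le_left _ _) hy.1),
        hzV (Zset_mono a (min_le_right _ _) hy)⟩⟩
  · intro a u hau hu
    obtain ⟨x, ε, hε, hax, hsub⟩ := z_pt hu a hau
    refine ⟨Zset x ε, ⟨Metric.ball x ε, (univ \ Nplus x) ∩ (univ \ Nminus x),
      ?_, ?_, ?_⟩, hax, hsub⟩
    · exact Metric.isOpen_ball
    · exact TopologicalSpace.GenerateOpen.inter _ _
        (.basic _ (Or.inl ⟨x, rfl⟩)) (.basic _ (Or.inr ⟨x, rfl⟩))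
    · rw [Zset, cone_eq]
end

section
/- The interval topology T_in^→ induced by the irreflexive horismos relation on Minkowski space ℝ⁴ is not equal to the Zeeman Z topology (correcting the claim of Theorem 2.1 of an earlier paper that horismos induces the Zeeman Z topology). -/
open Topology Set

-- auxiliary
noncomputable def eAux (t : ℝ) : M := (WithLp.equiv 2 _).symm ![0, t, 0, 0]

noncomputable def fAux : Filter M := Filter.map eAux Filter.cofinite

def Taux : TopologicalSpace M where
  IsOpen s := (0 : M) ∈ s → s ∈ fAux
  isOpen_univ := fun _ => Filter.univ_mem
  isOpen_inter := fun s t hs ht h0 => Filter.inter_mem (hs h0.1) (ht h0.2)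
  isOpen_sUnion := fun S hS h0 => by
    obtain ⟨s, hsS, h0s⟩ := h0
    exact Filter.mem_of_superset (hS s hsS h0s) (subset_sUnion_of_mem hsS)

lemma Q_line (t : ℝ) (x : M) :
    Q (eAux t - x) = x 0 ^ 2 - (t - x 1) ^ 2 - x 2 ^ 2 - x 3 ^ 2 := by
  simp [Q, eAux]

lemma sq_roots_finite (a d : ℝ) : {t : ℝ | (t - a) ^ 2 = d}.Finite := by
  apply Set.Finite.subset (Set.Finite.insert (a + Real.sqrt d) (Set.finite_singleton (a - Real.sqrt d)))
  intro t ht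
  have h : Real.sqrt d = |t - a| := by
    rw [← ht, Real.sqrt_sq_eq_abs]
  simp only [Set.mem_insert_iff, Set.mem_singleton_iff]
  rcases abs_cases (t - a) with ⟨h1, _⟩ | ⟨h1, _⟩ <;> rw [h1] at h
  · left; linarith
  · right; linarith

lemma line_lc_finite (x : M) : {t : ℝ | Q (eAux t - x) = 0}.Finite := by
  apply Set.Finite.subset (sq_roots_finite (x 1) (x 0 ^ 2 - x 2 ^ 2 - x 3 ^ 2))
  intro t ht
  simp only [Set.mem_setOf_eq, Q_line] at ht ⊢
  linarith

lemma Taux_le_Tin : Taux ≤ Tin := by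
  apply le_generateFrom
  rintro s (⟨x, rfl⟩ | ⟨x, rfl⟩) <;> intro _ <;>
    refine Filter.mem_map.2 (Filter.mem_cofinite.2 ((line_lc_finite x).subset ?_)) <;>
    intro t ht <;>
    simp only [Set.mem_compl_iff, Set.mem_preimage, Set.mem_diff, Set.mem_univ, true_and,
      not_not] at ht
  · exact ht.2.1
  · have h2 : Q (x - eAux t) = 0 := ht.2.1
    rw [show x - eAux t = -(eAux t - x) by abel, Q_neg] at h2
    exact h2

lemma norm_eAux (t : ℝ) : ‖eAux t‖ = |t| := by
  rw [EuclideanSpace.norm_eq]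
  simp [eAux, Fin.sum_univ_four, Real.sqrt_sq_eq_abs]

/-- The interval topology `T_in^→` induced by the irreflexive horismos is
not equal to the Zeeman `Z` topology. -/
theorem Tin_ne_zeemanZ : Tin ≠ ZeemanZ := by
  intro h
  have hZ : IsOpen[ZeemanZ] (Zset 0 1) :=
    TopologicalSpace.isOpen_generateFrom_of_mem ⟨0, 1, one_pos, rfl⟩
  have hT : IsOpen[Tin] (Zset 0 1) := h ▸ hZ
  have hA : IsOpen[Taux] (Zset 0 1) := Taux_le_Tin _ hT
  have h0 : (0 : M) ∈ Zset 0 1 := by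
    constructor
    · exact Metric.mem_ball_self one_pos
    · exact Or.inl (Or.inl rfl)
  have hf : Zset 0 1 ∈ fAux := hA h0
  have hfin : {t : ℝ | eAux t ∉ Zset 0 1}.Finite := hf
  have : {t : ℝ | (1:ℝ) ≤ t} ⊆ {t : ℝ | eAux t ∉ Zset 0 1} := by
    intro t ht hmem
    have := hmem.1
    rw [Metric.mem_ball, dist_zero_right, norm_eAux] at this
    have : (1:ℝ) ≤ |t| := le_trans ht (le_abs_self t)
    linarith
  exact (Set.Ici_infinite (1:ℝ)) (hfin.subset this)
end

section
/- The Zeeman Z topology on Minkowski space ℝ⁴ is strictly finer than the Euclidean topology E. -/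
open Topology Set

lemma zset_basic_open (x : M) (ε : ℝ) (hε : 0 < ε) : IsOpen[ZeemanZ] (Zset x ε) :=
  TopologicalSpace.GenerateOpen.basic _ ⟨x, ε, hε, rfl⟩

lemma mem_zset_self (x : M) {ε : ℝ} (hε : 0 < ε) : x ∈ Zset x ε :=
  ⟨Metric.mem_ball_self hε, Or.inl (Or.inl rfl)⟩

noncomputable def pt (t : ℝ) : M := (WithLp.equiv 2 (Fin 4 → ℝ)).symm ![t, t, 0, 0]

lemma pt_apply (t : ℝ) (i : Fin 4) : pt t i = ![t, t, 0, 0] i := rfl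

lemma Q_pt (t : ℝ) : Q (pt t) = 0 := by
  simp [Q, pt_apply]

lemma norm_pt (t : ℝ) (ht : 0 < t) : ‖pt t‖ < 2 * t := by
  have h : ‖pt t‖ = Real.sqrt (2 * t ^ 2) := by
    rw [EuclideanSpace.norm_eq]
    congr 1
    simp [pt_apply, Fin.sum_univ_four]
    ring
  rw [h]
  have h2 : (2 : ℝ) * t ^ 2 < (2 * t) ^ 2 := by nlinarith
  calc Real.sqrt (2 * t ^ 2) < Real.sqrt ((2 * t) ^ 2) := by
        apply Real.sqrt_lt_sqrt (by positivity) h2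
    _ = 2 * t := by rw [Real.sqrt_sq (by linarith)]

/-- The Zeeman `Z` topology is strictly finer than the Euclidean
topology `E`: every `E`-open set is `Z`-open and some `Z`-open set is not `E`-open. -/
theorem zeemanZ_strictly_finer :
    (∀ s : Set M, IsOpen[E] s → IsOpen[ZeemanZ] s) ∧
    (∃ s : Set M, IsOpen[ZeemanZ] s ∧ ¬ IsOpen[E] s) := by
  constructor
  · intro s hs
    have hball : ∀ x ∈ s, ∃ ε > 0, Metric.ball x ε ⊆ s := Metric.isOpen_iff.mp hs
    choose! ε hεpos hεsub using hball
    have hsu : s = ⋃ x ∈ s, Zset x (ε x) := by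
      apply Set.Subset.antisymm
      · intro x hx
        exact Set.mem_biUnion hx (mem_zset_self x (hεpos x hx))
      · intro y hy
        obtain ⟨x, hx, hyx⟩ := Set.mem_iUnion₂.mp hy
        exact hεsub x hx hyx.1
    rw [hsu]
    exact @isOpen_biUnion M M ZeemanZ _ _ fun x hx => zset_basic_open x (ε x) (hεpos x hx)
  · refine ⟨Zset 0 1, zset_basic_open 0 1 one_pos, ?_⟩
    intro hop
    obtain ⟨δ, hδ, hsub⟩ := Metric.isOpen_iff.mp hop 0 (mem_zset_self 0 one_pos)
    set t := δ / 4 with ht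
    have htpos : 0 < t := by positivity
    have hmem : pt t ∈ Metric.ball (0 : M) δ := by
      rw [Metric.mem_ball, dist_zero_right]
      calc ‖pt t‖ < 2 * t := norm_pt t htpos
        _ < δ := by rw [ht]; linarith
    have := (hsub hmem).2
    have hQ : Q (pt t - 0) = 0 := by rw [sub_zero]; exact Q_pt t
    have hne : pt t ≠ 0 := by
      intro h
      have : pt t 0 = (0 : M) 0 := by rw [h]
      simp [pt_apply] at this
      exact htpos.ne' this
    rcases this with (h | h) | (h | h)
    · exact hne h
    · exact absurd hQ (ne_of_gt h)
    · exact hne h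
    · exact absurd hQ (ne_of_lt h)
end

section
/- For every x in Minkowski space ℝ⁴ and every ε > 0, the set Z_ε(x) = B_ε^E(x) ∩ (C^T(x) ∪ C^S(x)) is not open in the Euclidean topology on ℝ⁴. -/
open Topology Set

/-- For every `x` and every `ε > 0`, the set
`Z_ε(x) = B_ε^E(x) ∩ (C^T(x) ∪ C^S(x))` is not open in the Euclidean topology. -/
theorem Zset_not_euclidean_open (x : M) (ε : ℝ) (hε : 0 < ε) :
    ¬ IsOpen[E] (Zset x ε) := by

  intro hopen
  have hx : x ∈ Zset x ε := by
    constructor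
    · exact Metric.mem_ball_self hε
    · left; left; rfl
  change IsOpen (Zset x ε) at hopen
  rw [Metric.isOpen_iff] at hopen
  obtain ⟨δ, hδ, hball⟩ := hopen x hx
  set t : ℝ := δ / 4 with ht
  have ht0 : 0 < t := by positivity
  set v : M := EuclideanSpace.single (0 : Fin 4) t + EuclideanSpace.single (1 : Fin 4) t with hv
  have hv0 : v 0 = t := by simp [hv]
  have hv1 : v 1 = t := by simp [hv]
  have hv2 : v 2 = 0 := by simp [hv]
  have hv3 : v 3 = 0 := by simp [hv]
  have hvne : v ≠ 0 := by
    intro h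
    have := congrArg (fun w : M => w 0) h
    rw [hv0] at this
    simp at this
    exact ht0.ne' this
  have hnorm : ‖v‖ < δ := by
    calc ‖v‖ ≤ ‖EuclideanSpace.single (0 : Fin 4) t‖ + ‖EuclideanSpace.single (1 : Fin 4) t‖ :=
          norm_add_le _ _
      _ = |t| + |t| := by rw [EuclideanSpace.norm_single, EuclideanSpace.norm_single, Real.norm_eq_abs]
      _ = δ / 2 := by rw [abs_of_pos ht0]; ring
      _ < δ := by linarith
  have hy : x + v ∈ Metric.ball x δ := by
    rw [Metric.mem_ball, dist_eq_norm]
    simpa using hnorm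
  have hyz := hball hy
  have hsub : (x + v) - x = v := by abel
  have hQ : Q ((x + v) - x) = 0 := by
    rw [hsub]
    simp [Q, hv0, hv1, hv2, hv3]
  have hne : x + v ≠ x := by
    intro h
    apply hvne
    have : x + v - x = x - x := by rw [h]
    simpa [hsub] using this
  rcases hyz.2 with (h | h) | (h | h)
  · exact hne h
  · exact absurd hQ (ne_of_gt h)
  · exact hne h
  · exact absurd hQ (ne_of_lt h)
end
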